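/- Let k₂(t,s) := (1/6)·s(1−t)(2t−s²−t²) for s ≤ t and k₂(t,s) := (1/6)·t(1−s)(2s−t²−s²) for s > t. Then K₂₁ := sup_{t∈[0,1]} ∫₀¹ |∂k₂/∂t(t,s)| ds ≤ 5/24. -/
import Mathlib


open Set MeasureTheory

/-- The formula for `∂k₂/∂t`, where `k₂` is the Green's function of `u'''' = g`
on `(0,1)` with `u(0) = u(1) = u''(0) = u''(1) = 0`. -/
noncomputable def dk2dt (t s : ℝ) : ℝ :=
  if s ≤ t then (1 / 6) * (s * (-6 * t + s ^ 2 + 3 * t ^ 2 + 2))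
  else (1 / 6) * ((1 - s) * (-s ^ 2 + 2 * s - 3 * t ^ 2))

/-- `K₂₁ = sup_{t∈[0,1]} ∫₀¹ |∂k₂/∂t(t,s)| ds ≤ 5/24`. -/
theorem stmt_15 :
    sSup ((fun t : ℝ => ∫ s in (0:ℝ)..1, |dk2dt t s|) '' Set.Icc (0:ℝ) 1) ≤ 5 / 24 := by
  apply Real.sSup_le _ (by norm_num)
  rintro x ⟨t, ht, rfl⟩
  obtain ⟨ht0, ht1⟩ := ht
  have hbd : ∀ s ∈ Set.uIoc (0:ℝ) 1, ‖|dk2dt t s|‖ ≤ 5 / 24 := by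
    intro s hs
    rw [Set.uIoc_of_le (by norm_num : (0:ℝ) ≤ 1)] at hs
    obtain ⟨hs0, hs1⟩ := hs
    rw [Real.norm_eq_abs, abs_abs, abs_le]
    unfold dk2dt
    split_ifs with h
    · constructor
      · nlinarith [sq_nonneg s, sq_nonneg t, sq_nonneg (t - 1), mul_nonneg hs0.le (sq_nonneg (t-1))]
      · nlinarith [sq_nonneg s, sq_nonneg (t - 1), sq_nonneg (s*t - 1), mul_nonneg hs0.le (sq_nonneg (t-1))]
    · push_neg at h
      constructor
      · nlinarith [sq_nonneg t, sq_nonneg (s - 1), mul_nonneg (sq_nonneg s) (sub_nonneg.2 hs1), sq_nonneg (3*s - 2), mul_nonneg (mul_nonneg (sub_nonneg.2 hs1) hs0.le) (sub_nonneg.2 h.le)]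
      · nlinarith [sq_nonneg t, sq_nonneg (s - 1), mul_nonneg (sub_nonneg.2 hs1) (sq_nonneg t)]
  calc (∫ s in (0:ℝ)..1, |dk2dt t s|) ≤ ‖∫ s in (0:ℝ)..1, |dk2dt t s|‖ := le_abs_self _
    _ ≤ 5 / 24 * |1 - 0| := intervalIntegral.norm_integral_le_of_norm_le_const hbd
    _ = 5 / 24 := by norm_num
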